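/- Let (κ_n) and (v_n) be sequences with κ_n ≥ 0 and v_n > 0 for all n, and set d1_n := −κ_n/v_n + v_n/2. If d1_n → −∞ as n → ∞, then C_BS(κ_n, v_n) ~ φ(d1_n) · v_n / ((−d1_n)(−d1_n + v_n)), i.e. the ratio of the two sides tends to 1. -/

import Mathlib

open MeasureTheory Filter Topology

/-- Standard normal density `φ(z) = e^{-z²/2}/√(2π)`. -/
noncomputable def stdPDF (z : ℝ) : ℝ := Real.exp (-(z^2)/2) / Real.sqrt (2*Real.pi)

/-- Standard normal distribution function `Φ(z) = ∫_{-∞}^z φ(t) dt`. -/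
noncomputable def stdCDF (z : ℝ) : ℝ := ∫ t in Set.Iic z, stdPDF t

/-- Black–Scholes call price `C_BS(κ,v) = Φ(d1) - e^κ Φ(d2)` with
`d1 = -κ/v + v/2`, `d2 = -κ/v - v/2`. -/
noncomputable def CBS (κ v : ℝ) : ℝ :=
  stdCDF (-κ/v + v/2) - Real.exp κ * stdCDF (-κ/v - v/2)

open Set Real

section Aux

lemma shiftInt (z : ℝ) (f : ℝ → ℝ) :
    ∫ t in Iic z, f t = ∫ s in Ioi (0:ℝ), f (z - s) := by
  have h₁ : MeasurePreserving (fun s : ℝ => z - s) volume volume :=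
    Measure.measurePreserving_sub_left volume z
  have h₂ : MeasurableEmbedding (fun s : ℝ => z - s) :=
    (Homeomorph.subLeft z).measurableEmbedding
  have himg : (fun s : ℝ => z - s) '' Set.Ioi 0 = Set.Iio z := by
    rw [Set.image_const_sub_Ioi]; simp
  rw [integral_Iic_eq_integral_Iio, ← himg, h₁.setIntegral_image_emb h₂]

lemma stdPDF_pos (z : ℝ) : 0 < stdPDF z := by
  unfold stdPDF
  have : 0 < Real.sqrt (2*Real.pi) := Real.sqrt_pos.mpr (by positivity)
  positivity

lemma stdPDF_sub (z s : ℝ) : stdPDF (z - s) = stdPDF z * Real.exp (z*s - s^2/2) := by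
  unfold stdPDF
  rw [div_mul_eq_mul_div, ← Real.exp_add]
  congr 2
  ring

lemma integrable_stdPDF : Integrable stdPDF := by
  have h : Integrable (fun t : ℝ => Real.exp (-(1/2) * t^2)) :=
    integrable_exp_neg_mul_sq one_half_pos
  have h2 := h.div_const (Real.sqrt (2*Real.pi))
  have he : stdPDF = fun t : ℝ => Real.exp (-(1/2) * t^2) / Real.sqrt (2*Real.pi) := by
    funext t
    unfold stdPDF
    rw [show -(t^2)/2 = -(1/2) * t^2 by ring]
  rw [he]
  exact h2

lemma integrable_stdPDF_shift (z : ℝ) : Integrable (fun s : ℝ => stdPDF (z - s)) := by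
  have h₁ : MeasurePreserving (fun s : ℝ => z - s) volume volume :=
    Measure.measurePreserving_sub_left volume z
  have h₂ : MeasurableEmbedding (fun s : ℝ => z - s) :=
    (Homeomorph.subLeft z).measurableEmbedding
  exact (h₁.integrable_comp_emb h₂).mpr integrable_stdPDF

lemma stdCDF_eq (z : ℝ) : stdCDF z = ∫ s in Ioi (0:ℝ), stdPDF (z - s) :=
  shiftInt z stdPDF

lemma key_pointwise (κ v d1 s : ℝ) (hκ : κ = v^2/2 - v*d1) :
    stdPDF (d1 - s) - Real.exp κ * stdPDF (d1 - v - s)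
      = stdPDF d1 * (Real.exp (d1*s - s^2/2) * (1 - Real.exp (-(v*s)))) := by
  have h2 : d1 - v - s = d1 - (v + s) := by ring
  rw [stdPDF_sub d1 s, h2, stdPDF_sub d1 (v+s), hκ]
  have h3 : Real.exp (v^2/2 - v*d1) * Real.exp (d1*(v+s) - (v+s)^2/2)
      = Real.exp (d1*s - s^2/2) * Real.exp (-(v*s)) := by
    rw [← Real.exp_add, ← Real.exp_add]; congr 1; ring
  linear_combination (-stdPDF d1) * h3

lemma CBS_eq (κ v d1 : ℝ) (hv : 0 < v) (hd1 : d1 = -κ/v + v/2) :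
    CBS κ v = stdPDF d1 * ∫ s in Ioi (0:ℝ),
      Real.exp (d1*s - s^2/2) * (1 - Real.exp (-(v*s))) := by
  have hκ : κ = v^2/2 - v*d1 := by
    rw [hd1]; field_simp; ring
  have hd2 : -κ/v - v/2 = d1 - v := by
    rw [hd1]; ring
  unfold CBS
  rw [← hd1, hd2, stdCDF_eq, stdCDF_eq]
  rw [← integral_const_mul]
  rw [← integral_sub (integrable_stdPDF_shift d1).integrableOn
    (((integrable_stdPDF_shift (d1 - v)).const_mul _).integrableOn)]
  rw [← integral_const_mul]
  refine setIntegral_congr_fun measurableSet_Ioi (fun s _ => ?_)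
  have := key_pointwise κ v d1 s hκ
  simpa [sub_sub, show d1 - v - s = d1 - s - v from by ring] using this

lemma intExp (a : ℝ) (ha : 0 < a) : ∫ s in Ioi (0:ℝ), Real.exp (-(a*s)) = 1/a := by
  have h := Real.integral_rpow_mul_exp_neg_mul_Ioi (a := 1) one_pos ha
  rw [Real.Gamma_one, Real.rpow_one, mul_one] at h
  rw [← h]
  refine setIntegral_congr_fun measurableSet_Ioi (fun t ht => ?_)
  rw [sub_self, Real.rpow_zero, one_mul]

lemma intSqExp (a : ℝ) (ha : 0 < a) :
    ∫ s in Ioi (0:ℝ), s^2 * Real.exp (-(a*s)) = 2/a^3 := by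
  have h := Real.integral_rpow_mul_exp_neg_mul_Ioi (a := 3) (by norm_num) ha
  have hG : Real.Gamma 3 = 2 := by
    rw [show (3:ℝ) = (2:ℕ) + 1 by norm_num, Real.Gamma_nat_eq_factorial]
    norm_num
  rw [hG] at h
  have heq : ∫ s in Ioi (0:ℝ), s^2 * Real.exp (-(a*s))
      = ∫ t in Ioi (0:ℝ), t ^ ((3:ℝ)-1) * Real.exp (-(a*t)) := by
    refine setIntegral_congr_fun measurableSet_Ioi (fun t ht => ?_)
    rw [show (3:ℝ)-1 = ((2:ℕ):ℝ) by norm_num, Real.rpow_natCast]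
  rw [heq, h, show ((3:ℝ)) = ((3:ℕ):ℝ) by norm_num, Real.rpow_natCast]
  field_simp

lemma intgExp (a : ℝ) (ha : 0 < a) :
    IntegrableOn (fun s => Real.exp (-(a*s))) (Ioi (0:ℝ)) := by
  simpa [neg_mul] using exp_neg_integrableOn_Ioi 0 ha

lemma intgSqExp (a : ℝ) (ha : 0 < a) :
    IntegrableOn (fun s => s^2 * Real.exp (-(a*s))) (Ioi (0:ℝ)) := by
  have h := integrableOn_rpow_mul_exp_neg_mul_rpow (p := 1) (s := 2) (b := a)
    (by norm_num) one_pos ha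
  refine h.congr_fun (fun t ht => ?_) measurableSet_Ioi
  dsimp only
  rw [Real.rpow_one, Real.rpow_two, sq, neg_mul]

lemma intg_main (v d1 : ℝ) (hv : 0 < v) (hneg : d1 < 0) :
    IntegrableOn (fun s => Real.exp (d1*s - s^2/2) * (1 - Real.exp (-(v*s)))) (Ioi (0:ℝ)) := by
  have ha : (0:ℝ) < -d1 := by linarith
  refine Integrable.mono' (intgExp (-d1) ha) ?_ ?_
  · exact (Continuous.mul (Real.continuous_exp.comp (by fun_prop))
      (continuous_const.sub (Real.continuous_exp.comp (by fun_prop)))).aestronglyMeasurable.restrict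
  · rw [ae_restrict_iff' measurableSet_Ioi]
    refine Filter.Eventually.of_forall (fun s hs => ?_)
    have hs' : (0:ℝ) < s := hs
    have h1 : Real.exp (-(v*s)) ≤ 1 := Real.exp_le_one_iff.mpr (by nlinarith)
    have h2 : (0:ℝ) ≤ 1 - Real.exp (-(v*s)) := by linarith
    rw [Real.norm_eq_abs, abs_of_nonneg (mul_nonneg (Real.exp_pos _).le h2)]
    calc Real.exp (d1*s - s^2/2) * (1 - Real.exp (-(v*s)))
        ≤ Real.exp (d1*s - s^2/2) * 1 :=
          mul_le_mul_of_nonneg_left (by linarith [Real.exp_pos (-(v*s))]) (Real.exp_pos _).le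
      _ ≤ Real.exp (-(-d1*s)) := by
          rw [mul_one]; exact Real.exp_le_exp.mpr (by nlinarith [sq_nonneg s])

lemma int_upper (v d1 : ℝ) (hv : 0 < v) (hneg : d1 < 0) :
    ∫ s in Ioi (0:ℝ), Real.exp (d1*s - s^2/2) * (1 - Real.exp (-(v*s)))
      ≤ 1/(-d1) - 1/(-d1+v) := by
  have ha : (0:ℝ) < -d1 := by linarith
  have hb : (0:ℝ) < -d1 + v := by linarith
  have hI : ∫ s in Ioi (0:ℝ), (Real.exp (-(-d1*s)) - Real.exp (-((-d1+v)*s)))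
      = 1/(-d1) - 1/(-d1+v) := by
    rw [integral_sub (intgExp _ ha) (intgExp _ hb), intExp _ ha, intExp _ hb]
  rw [← hI]
  refine setIntegral_mono_on (intg_main v d1 hv hneg)
    ((intgExp _ ha).sub (intgExp _ hb)) measurableSet_Ioi (fun s hs => ?_)
  have hs' : (0:ℝ) < s := hs
  have e1 : Real.exp (-((-d1+v)*s)) = Real.exp (-(-d1*s)) * Real.exp (-(v*s)) := by
    rw [← Real.exp_add]; congr 1; ring
  have h1 : Real.exp (-(v*s)) ≤ 1 := Real.exp_le_one_iff.mpr (by nlinarith)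
  have h2 : (0:ℝ) ≤ 1 - Real.exp (-(v*s)) := by linarith
  calc Real.exp (d1*s - s^2/2) * (1 - Real.exp (-(v*s)))
      ≤ Real.exp (-(-d1*s)) * (1 - Real.exp (-(v*s))) :=
        mul_le_mul_of_nonneg_right (Real.exp_le_exp.mpr (by nlinarith [sq_nonneg s])) h2
    _ = Real.exp (-(-d1*s)) - Real.exp (-((-d1+v)*s)) := by rw [e1]; ring

lemma int_lower (v d1 : ℝ) (hv : 0 < v) (hneg : d1 < 0) :
    (1/(-d1) - 1/(-d1+v)) - (1/(-d1)^3 - 1/(-d1+v)^3)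
      ≤ ∫ s in Ioi (0:ℝ), Real.exp (d1*s - s^2/2) * (1 - Real.exp (-(v*s))) := by
  have ha : (0:ℝ) < -d1 := by linarith
  have hb : (0:ℝ) < -d1 + v := by linarith
  have J1 : IntegrableOn (fun s : ℝ => Real.exp (-(-d1*s)) - Real.exp (-((-d1+v)*s))) (Ioi 0) :=
    (intgExp _ ha).sub (intgExp _ hb)
  have J2 : IntegrableOn (fun s : ℝ =>
      1/2 * (s^2 * Real.exp (-(-d1*s))) - 1/2 * (s^2 * Real.exp (-((-d1+v)*s)))) (Ioi 0) :=
    ((intgSqExp _ ha).const_mul (1/2)).sub ((intgSqExp _ hb).const_mul (1/2))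
  have J3 : IntegrableOn (fun s : ℝ => 1/2 * (s^2 * Real.exp (-(-d1*s)))) (Ioi 0) :=
    (intgSqExp _ ha).const_mul (1/2)
  have J4 : IntegrableOn (fun s : ℝ => 1/2 * (s^2 * Real.exp (-((-d1+v)*s)))) (Ioi 0) :=
    (intgSqExp _ hb).const_mul (1/2)
  have hJ : ∫ s in Ioi (0:ℝ),
      ((Real.exp (-(-d1*s)) - Real.exp (-((-d1+v)*s)))
        - (1/2 * (s^2 * Real.exp (-(-d1*s))) - 1/2 * (s^2 * Real.exp (-((-d1+v)*s)))))
      = (1/(-d1) - 1/(-d1+v)) - (1/(-d1)^3 - 1/(-d1+v)^3) := by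
    rw [integral_sub J1 J2, integral_sub (intgExp _ ha) (intgExp _ hb), integral_sub J3 J4]
    rw [integral_const_mul, integral_const_mul, intExp _ ha, intExp _ hb,
      intSqExp _ ha, intSqExp _ hb]
    ring
  rw [← hJ]
  refine setIntegral_mono_on (J1.sub J2)
    (intg_main v d1 hv hneg) measurableSet_Ioi (fun s hs => ?_)
  have hs' : (0:ℝ) < s := hs
  have e1 : Real.exp (-((-d1+v)*s)) = Real.exp (-(-d1*s)) * Real.exp (-(v*s)) := by
    rw [← Real.exp_add]; congr 1; ring
  have h1 : Real.exp (-(v*s)) ≤ 1 := Real.exp_le_one_iff.mpr (by nlinarith)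
  have h2 : (0:ℝ) ≤ 1 - Real.exp (-(v*s)) := by linarith
  have hfac : (0:ℝ) ≤ Real.exp (-(-d1*s)) * (1 - Real.exp (-(v*s))) :=
    mul_nonneg (Real.exp_pos _).le h2
  have h3 : 1 - s^2/2 ≤ Real.exp (-(s^2)/2) := by
    have := Real.add_one_le_exp (-(s^2)/2)
    linarith
  calc (Real.exp (-(-d1*s)) - Real.exp (-((-d1+v)*s)))
        - (1/2 * (s^2 * Real.exp (-(-d1*s))) - 1/2 * (s^2 * Real.exp (-((-d1+v)*s))))
      = (1 - s^2/2) * (Real.exp (-(-d1*s)) * (1 - Real.exp (-(v*s)))) := by rw [e1]; ring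
    _ ≤ Real.exp (-(s^2)/2) * (Real.exp (-(-d1*s)) * (1 - Real.exp (-(v*s)))) :=
        mul_le_mul_of_nonneg_right h3 hfac
    _ = Real.exp (d1*s - s^2/2) * (1 - Real.exp (-(v*s))) := by
        rw [← mul_assoc, ← Real.exp_add]
        congr 2
        ring

end Aux

/-- **Black–Scholes asymptotics when `d1 → -∞`.** For `κ n ≥ 0`, `v n > 0`, with
`d1_n = -κ n/v n + v n/2 → -∞`, one has
`C_BS(κ n, v n) ~ φ(d1_n) · v n / ((-d1_n)(-d1_n + v n))`. -/
theorem CBS_asymptotics_d1_to_neg_infty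
    (κ v : ℕ → ℝ) (hκ : ∀ n, 0 ≤ κ n) (hv : ∀ n, 0 < v n)
    (d1 : ℕ → ℝ) (hd1 : ∀ n, d1 n = -(κ n) / v n + v n / 2)
    (hbot : Tendsto d1 atTop atBot) :
    Tendsto (fun n => CBS (κ n) (v n) /
        (stdPDF (d1 n) * (v n / ((-(d1 n)) * (-(d1 n) + v n)))))
      atTop (𝓝 1) := by
  have hneg : ∀ᶠ n in atTop, d1 n ≤ -1 := hbot.eventually (eventually_le_atBot (-1))
  have hna : Tendsto (fun n => -d1 n) atTop atTop := tendsto_neg_atBot_atTop.comp hbot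
  have hsq : Tendsto (fun n => (d1 n)^2) atTop atTop := by
    refine (hna.atTop_mul_atTop₀ hna).congr (fun n => by ring)
  have h0 : Tendsto (fun n => 3/(d1 n)^2) atTop (𝓝 0) := tendsto_const_nhds.div_atTop hsq
  have hlow : Tendsto (fun n => 1 - 3/(d1 n)^2) atTop (𝓝 1) := by
    have := (tendsto_const_nhds (x := (1:ℝ)) (f := atTop)).sub h0
    simpa using this
  refine tendsto_of_tendsto_of_tendsto_of_le_of_le' hlow tendsto_const_nhds ?_ ?_
  · -- lower bound
    filter_upwards [hneg] with n hn
    have hneg' : d1 n < 0 := by linarith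
    have hA : (0:ℝ) < -(d1 n) := by linarith
    have hB : (0:ℝ) < -(d1 n) + v n := by linarith [hv n]
    have hA0 : (-(d1 n)) ≠ 0 := ne_of_gt hA
    have hB0 : (-(d1 n) + v n) ≠ 0 := ne_of_gt hB
    have hP : 0 < stdPDF (d1 n) := stdPDF_pos (d1 n)
    have hQ : (0:ℝ) < v n / ((-(d1 n)) * (-(d1 n) + v n)) :=
      div_pos (hv n) (mul_pos hA hB)
    have hQeq : v n / ((-(d1 n)) * (-(d1 n) + v n)) = 1/(-(d1 n)) - 1/(-(d1 n) + v n) := by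
      rw [div_sub_div _ _ hA0 hB0, div_eq_div_iff (mul_ne_zero hA0 hB0) (mul_ne_zero hA0 hB0)]
      ring
    have hCeq := CBS_eq (κ n) (v n) (d1 n) (hv n) (hd1 n)
    have hlb := int_lower (v n) (d1 n) (hv n) hneg'
    -- key algebraic inequality
    have key0 : (-(d1 n) + v n)^3 - (-(d1 n))^3 ≤ 3*(v n)*(-(d1 n) + v n)^2 := by
      nlinarith [mul_nonneg (mul_nonneg (hv n).le (hv n).le)
        (by linarith [hv n] : (0:ℝ) ≤ 3*(-(d1 n)) + 2*(v n))]
    have hE : 1/(-(d1 n))^3 - 1/(-(d1 n) + v n)^3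
        ≤ 3/(d1 n)^2 * (v n / ((-(d1 n)) * (-(d1 n) + v n))) := by
      have hd2 : (d1 n)^2 = (-(d1 n))^2 := by ring
      rw [hd2]
      have e1 : 1/(-(d1 n))^3 - 1/(-(d1 n) + v n)^3
          = ((-(d1 n) + v n)^3 - (-(d1 n))^3)/((-(d1 n))^3*(-(d1 n) + v n)^3) := by
        rw [div_sub_div _ _ (by positivity) (by positivity),
          div_eq_div_iff (by positivity) (by positivity)]
        ring
      have e2 : 3/(-(d1 n))^2 * (v n / ((-(d1 n)) * (-(d1 n) + v n)))
          = (3*(v n)*(-(d1 n) + v n)^2)/((-(d1 n))^3*(-(d1 n) + v n)^3) := by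
        rw [div_mul_div_comm, div_eq_div_iff (by positivity) (by positivity)]
        ring
      rw [e1, e2]
      gcongr
    rw [le_div_iff₀ (mul_pos hP hQ)]
    calc (1 - 3/(d1 n)^2) * (stdPDF (d1 n) * (v n / ((-(d1 n)) * (-(d1 n) + v n))))
        = stdPDF (d1 n) * ((1 - 3/(d1 n)^2) * (v n / ((-(d1 n)) * (-(d1 n) + v n)))) := by
          ring
      _ ≤ stdPDF (d1 n) *
          ((1/(-(d1 n)) - 1/(-(d1 n) + v n)) - (1/(-(d1 n))^3 - 1/(-(d1 n) + v n)^3)) := by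
          refine mul_le_mul_of_nonneg_left ?_ hP.le
          rw [← hQeq]
          nlinarith [hE]
      _ ≤ stdPDF (d1 n) * ∫ s in Ioi (0:ℝ),
            Real.exp (d1 n*s - s^2/2) * (1 - Real.exp (-(v n*s))) :=
          mul_le_mul_of_nonneg_left hlb hP.le
      _ = CBS (κ n) (v n) := hCeq.symm
  · -- upper bound
    filter_upwards [hneg] with n hn
    have hneg' : d1 n < 0 := by linarith
    have hA : (0:ℝ) < -(d1 n) := by linarith
    have hB : (0:ℝ) < -(d1 n) + v n := by linarith [hv n]
    have hA0 : (-(d1 n)) ≠ 0 := ne_of_gt hA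
    have hB0 : (-(d1 n) + v n) ≠ 0 := ne_of_gt hB
    have hP : 0 < stdPDF (d1 n) := stdPDF_pos (d1 n)
    have hQ : (0:ℝ) < v n / ((-(d1 n)) * (-(d1 n) + v n)) :=
      div_pos (hv n) (mul_pos hA hB)
    have hQeq : v n / ((-(d1 n)) * (-(d1 n) + v n)) = 1/(-(d1 n)) - 1/(-(d1 n) + v n) := by
      rw [div_sub_div _ _ hA0 hB0, div_eq_div_iff (mul_ne_zero hA0 hB0) (mul_ne_zero hA0 hB0)]
      ring
    have hCeq := CBS_eq (κ n) (v n) (d1 n) (hv n) (hd1 n)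
    have hub := int_upper (v n) (d1 n) (hv n) hneg'
    rw [div_le_one (mul_pos hP hQ), hCeq, hQeq]
    exact mul_le_mul_of_nonneg_left hub hP.le
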